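/- With the n-dependent strategy φ(1,n)=1, φ(2,n)=0, φ(3,n)= parity indicator of n, and t_A, t_B : ℕ → {1,2,3} independent i.i.d. uniform sequences, the concordance sequence C_n = indicator(φ(t_A(n),n) = φ(t_B(n),n)) satisfies: almost surely the limiting frequency of 1's in (C_n) equals 5/9, hence C is almost surely not 1-Borel normal. -/

import Mathlib

open MeasureTheory ProbabilityTheory Filter

theorem stmt_4 {Ω : Type*} [MeasurableSpace Ω] (μ : Measure Ω) [IsProbabilityMeasure μ]
    (tA tB : ℕ → Ω → Fin 3)
    (hm : ∀ n, Measurable (fun ω => (tA n ω, tB n ω)))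
    (hiid : ∀ n, Measure.map (fun ω => (tA n ω, tB n ω)) μ =
      (PMF.uniformOfFintype (Fin 3 × Fin 3)).toMeasure)
    (hindep : iIndepFun (fun n ω => (tA n ω, tB n ω)) μ)
    (φ : Fin 3 → ℕ → Fin 2)
    (h1 : ∀ n, φ 0 n = 1) (h2 : ∀ n, φ 1 n = 0)
    (h3 : ∀ n, φ 2 n = if Even n then 1 else 0) :
    ∀ᵐ ω ∂μ,
      Tendsto (fun N : ℕ =>
          ((Finset.range N).filter (fun n => φ (tA n ω) n = φ (tB n ω) n)).card / (N : ℝ))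
        atTop (nhds (5/9)) ∧
      ¬ Tendsto (fun N : ℕ =>
          ((Finset.range N).filter (fun n => φ (tA n ω) n = φ (tB n ω) n)).card / (N : ℝ))
        atTop (nhds (1/2)) := by
  classical
  set g : ℕ → Fin 3 × Fin 3 → ℝ := fun n p => if φ p.1 n = φ p.2 n then 1 else 0 with hg
  set X : ℕ → Ω → ℝ := fun n ω => g n (tA n ω, tB n ω) with hX
  have hgm : ∀ n, Measurable (g n) := fun n => measurable_of_countable _
  have hXm : ∀ n, Measurable (X n) := fun n => (hgm n).comp (hm n)
  have hmapX : ∀ n, Measure.map (X n) μ =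
      Measure.map (g n) (PMF.uniformOfFintype (Fin 3 × Fin 3)).toMeasure := by
    intro n
    rw [← hiid n, Measure.map_map (hgm n) (hm n)]
    rfl
  -- the swap permutation
  set τ : Fin 3 → Fin 3 := fun a => Equiv.swap (0 : Fin 3) 1 a with hτ
  set σ : Fin 3 × Fin 3 → Fin 3 × Fin 3 := fun p => (τ p.1, τ p.2) with hσ
  have hσu : Measure.map σ (PMF.uniformOfFintype (Fin 3 × Fin 3)).toMeasure =
      (PMF.uniformOfFintype (Fin 3 × Fin 3)).toMeasure := by
    refine Measure.ext_of_singleton fun a => ?_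
    rw [Measure.map_apply (measurable_of_countable _) (measurableSet_singleton _)]
    have hpre : σ ⁻¹' {a} = {(τ a.1, τ a.2)} := by
      ext p
      simp only [Set.mem_preimage, Set.mem_singleton_iff, hσ, Prod.ext_iff, hτ]
      constructor
      · rintro ⟨hx, hy⟩
        exact ⟨by rw [← hx, Equiv.swap_apply_self], by rw [← hy, Equiv.swap_apply_self]⟩
      · rintro ⟨hx, hy⟩
        exact ⟨by rw [hx, Equiv.swap_apply_self], by rw [hy, Equiv.swap_apply_self]⟩
    rw [hpre, PMF.toMeasure_apply_singleton _ _ (measurableSet_singleton _),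
      PMF.toMeasure_apply_singleton _ _ (measurableSet_singleton _)]
    simp [PMF.uniformOfFintype_apply]
  have hdist : ∀ n, Measure.map (g n) (PMF.uniformOfFintype (Fin 3 × Fin 3)).toMeasure =
      Measure.map (g 0) (PMF.uniformOfFintype (Fin 3 × Fin 3)).toMeasure := by
    intro n
    rcases Nat.even_or_odd n with hn | hn
    · have : g n = g 0 := by
        funext p
        have hφ : ∀ a : Fin 3, φ a n = φ a 0 := by
          intro a
          fin_cases a <;> simp [h1, h2, h3, hn, Even.zero]
        simp only [hg, hφ]
      rw [this]
    · have hne : ¬ Even n := Nat.not_even_iff_odd.mpr hn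
      have hcomp : g n = g 0 ∘ σ := by
        funext p
        obtain ⟨a, b⟩ := p
        fin_cases a <;> fin_cases b <;>
          simp [hg, hσ, hτ, h1, h2, h3, hne, Equiv.swap_apply_left,
            Equiv.swap_apply_right, Equiv.swap_apply_of_ne_of_ne]
      rw [hcomp, ← Measure.map_map (measurable_of_countable _) (measurable_of_countable _),
        hσu]
  have hident : ∀ n, IdentDistrib (X n) (X 0) μ μ := fun n =>
    ⟨(hXm n).aemeasurable, (hXm 0).aemeasurable, by rw [hmapX n, hmapX 0, hdist n]⟩
  have hpind : Pairwise (Function.onFun (IndepFun · · μ) X) := fun i j hij =>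
    (hindep.indepFun hij).comp (hgm i) (hgm j)
  have hint : Integrable (X 0) μ := by
    refine (integrable_const (1 : ℝ)).mono' (hXm 0).aestronglyMeasurable ?_
    filter_upwards with ω
    simp only [hX, hg]
    split <;> norm_num
  have hintg : Integrable (g 0) (PMF.uniformOfFintype (Fin 3 × Fin 3)).toMeasure := by
    refine (integrable_const (1 : ℝ)).mono' (measurable_of_countable _).aestronglyMeasurable ?_
    filter_upwards with p
    simp only [hg]
    split <;> norm_num
  have hmean : μ[X 0] = 5 / 9 := by
    have h0 : μ[X 0] = ∫ p, g 0 p ∂(PMF.uniformOfFintype (Fin 3 × Fin 3)).toMeasure := by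
      rw [← hiid 0, integral_map (hm 0).aemeasurable (hgm 0).aestronglyMeasurable]
    rw [h0, integral_fintype hintg]
    have hs : ∀ a : Fin 3 × Fin 3,
        (((PMF.uniformOfFintype (Fin 3 × Fin 3)).toMeasure {a}).toReal : ℝ) = 1 / 9 := by
      intro a
      rw [PMF.toMeasure_apply_singleton _ _ (measurableSet_singleton _)]
      simp [PMF.uniformOfFintype_apply]
    simp only [measureReal_def, hs, smul_eq_mul]
    rw [Fintype.sum_prod_type]
    simp [Fin.sum_univ_three, hg, h1, h2, h3, Even.zero]
    norm_num
  have hslln := strong_law_ae_real X hint hpind hident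
  rw [hmean] at hslln
  filter_upwards [hslln] with ω hω
  have hsum : (fun N : ℕ =>
      (((Finset.range N).filter (fun n => φ (tA n ω) n = φ (tB n ω) n)).card : ℝ) / (N : ℝ)) =
      fun N : ℕ => (∑ i ∈ Finset.range N, X i ω) / (N : ℝ) := by
    funext N
    congr 1
    rw [Finset.card_filter]
    push_cast
    refine Finset.sum_congr rfl fun i _ => ?_
    simp only [hX, hg]
  rw [hsum]
  refine ⟨hω, fun hcon => ?_⟩
  have := tendsto_nhds_unique hω hcon
  norm_num at this
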